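/- Let M be a module over a commutative ring R, let ∂ : M → M be an R-linear map, and let F : ℤ → (submodules of M) be an increasing family with ∂(F_j) ⊆ F_{j+1} for all j ∈ ℤ. Let (m_j)_{j∈ℤ} be a family of elements of M such that m_j = 0 for all j < N, for some N ∈ ℤ. If ∂m_j + m_{j+1} ∈ F_j for every j ∈ ℤ, then m_j ∈ F_{j−1} for every j ∈ ℤ. -/

import Mathlib

/-- If `F` is increasing with `d(F_j) ⊆ F_{j+1}`, `(m_j)` vanishes for `j < N`,
and `d m_j + m_{j+1} ∈ F_j` for every `j`, then `m_j ∈ F_{j−1}` for every `j`. -/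
theorem stmt_8 {R M : Type*} [CommRing R] [AddCommGroup M] [Module R M]
    (d : M →ₗ[R] M) (F : ℤ → Submodule R M) (hmono : Monotone F)
    (hd : ∀ j : ℤ, (F j).map d ≤ F (j + 1))
    (m : ℤ → M) (N : ℤ) (hN : ∀ j < N, m j = 0)
    (h : ∀ j : ℤ, d (m j) + m (j + 1) ∈ F j) :
    ∀ j : ℤ, m j ∈ F (j - 1) := by
  have key : ∀ j : ℤ, N ≤ j → m j ∈ F (j - 1) := by
    intro j
    refine Int.le_induction (motive := fun j _ => m j ∈ F (j - 1)) ?_ ?_ j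
    ·
      have h0 : m (N - 1) = 0 := hN _ (by omega)
      have := h (N - 1)
      rw [h0, map_zero, zero_add, sub_add_cancel] at this
      exact this
    · intro j hj ih
      have hdj : d (m j) ∈ F j := by
        have := hd (j - 1) ⟨m j, ih, rfl⟩
        rwa [sub_add_cancel] at this
      have heq : m (j + 1) = (d (m j) + m (j + 1)) - d (m j) := by abel
      rw [show j + 1 - 1 = j by ring, heq]
      exact Submodule.sub_mem _ (h j) hdj
  intro j
  by_cases hj : N ≤ j
  · exact key j hj
  · rw [hN j (by omega)]; exact (F _).zero_mem
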